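/- The exponential generating function a(t) = Σ_{n≥1} n^{n-1} t^n/n! for labeled rooted trees satisfies the functional equation a(t) = t·exp(a(t)) as formal power series. -/

import Mathlib

open Finset Polynomial


lemma altsum : ∀ j n : ℕ, 1 ≤ n → j < n →
    ∑ k ∈ range (n+1), (-1:ℚ)^k * (n.choose k) * (k:ℚ)^j = 0 := by
  intro j
  induction j using Nat.strong_induction_on with
  | _ j IH =>
    intro n hn hj
    match j with
    | 0 =>
      have h := Int.alternating_sum_range_choose_of_ne (Nat.one_le_iff_ne_zero.mp hn)
      have : ((∑ i ∈ range (n+1), (-1:ℤ)^i * n.choose i : ℤ) : ℚ) = 0 := by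
        rw [h]; norm_num
      push_cast at this
      simpa using this
    | (j+1) =>
      have hn2 : 2 ≤ n := by omega
      rw [Finset.sum_range_succ']
      simp only [Nat.cast_zero, zero_pow (Nat.succ_ne_zero j), mul_zero, add_zero]
      push_cast
      have key : ∀ k ∈ range n, (-1:ℚ)^(k+1) * (n.choose (k+1)) * ((k:ℚ)+1)^(j+1)
          = -(n:ℚ) * ((-1:ℚ)^k * ((n-1).choose k) * ((k:ℚ)+1)^j) := by
        intro k hk
        have hcc : (n:ℚ) * ((n-1).choose k) = (n.choose (k+1)) * ((k:ℚ)+1) := by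
          have := Nat.add_one_mul_choose_eq (n-1) k
          rw [Nat.sub_add_cancel hn] at this
          exact_mod_cast congrArg (Nat.cast : ℕ → ℚ) this
        linear_combination (-1:ℚ)^k * ((k:ℚ)+1)^j * hcc
      rw [Finset.sum_congr rfl key, ← Finset.mul_sum]
      -- expand (k+1)^j by binomial
      have expand : ∀ k ∈ range n, (-1:ℚ)^k * ((n-1).choose k) * ((k:ℚ)+1)^j
          = ∑ s ∈ range (j+1), (j.choose s) * ((-1:ℚ)^k * ((n-1).choose k) * (k:ℚ)^s) := by
        intro k hk
        rw [add_pow]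
        rw [Finset.mul_sum]
        refine Finset.sum_congr rfl fun s hs => by ring
      rw [Finset.sum_congr rfl expand, Finset.sum_comm]
      have inner : ∀ s ∈ range (j+1),
          ∑ k ∈ range n, (j.choose s : ℚ) * ((-1:ℚ)^k * ((n-1).choose k) * (k:ℚ)^s) = 0 := by
        intro s hs
        rw [← Finset.mul_sum]
        have h0 : ∑ k ∈ range ((n-1)+1), (-1:ℚ)^k * ((n-1).choose k) * (k:ℚ)^s = 0 := by
          have hs' := mem_range.mp hs
          exact IH s hs' (n-1) (by omega) (by omega)
        rw [Nat.sub_add_cancel hn] at h0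
        rw [h0, mul_zero]
      rw [Finset.sum_congr rfl inner, Finset.sum_const_zero, mul_zero]

lemma poly_eq_of (P Q : ℚ[X]) (h1 : derivative P = derivative Q) (c : ℚ)
    (h2 : P.eval c = Q.eval c) : P = Q := by
  have hd : derivative (P - Q) = 0 := by rw [derivative_sub, h1, sub_self]
  have h3 := eq_C_of_derivative_eq_zero hd
  have h4 : (P - Q).eval c = 0 := by rw [eval_sub, h2, sub_self]
  rw [h3, eval_C] at h4
  have : P - Q = 0 := by rw [h3, h4, map_zero]
  exact sub_eq_zero.mp this

lemma polyB : ∀ n : ℕ, 1 ≤ n →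
    ∑ k ∈ Icc 1 n, C ((n.choose k : ℚ) * (k:ℚ)^(k-1)) * (X + C ((n-k : ℕ) : ℚ))^(n-k)
      = C (n:ℚ) * (X + C (n:ℚ))^(n-1) := by
  intro n hn
  induction n, hn using Nat.le_induction with
  | base => simp
  | succ n hn IH =>
    refine poly_eq_of _ _ ?_ (-(n+1:ℚ)) ?_
    · -- derivatives agree
      rw [Finset.sum_Icc_succ_top (by omega : 1 ≤ n+1), derivative_add, derivative_sum]
      have htopz : derivative (C (((n+1).choose (n+1) : ℚ) * ((n+1:ℕ):ℚ)^((n+1)-1)) *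
          (X + C (((n+1)-(n+1) : ℕ) : ℚ))^((n+1)-(n+1))) = 0 := by
        rw [Nat.sub_self, pow_zero, mul_one, derivative_C]
      rw [htopz, add_zero]
      have hterm : ∀ k ∈ Icc 1 n,
          derivative (C (((n+1).choose k : ℚ) * (k:ℚ)^(k-1)) * (X + C ((n+1-k : ℕ) : ℚ))^(n+1-k))
          = C ((n+1 : ℚ)) * (C ((n.choose k : ℚ) * (k:ℚ)^(k-1)) * (X + C ((n+1-k : ℕ) : ℚ))^(n-k)) := by
        intro k hk
        rw [mem_Icc] at hk
        rw [derivative_C_mul, derivative_pow, derivative_add, derivative_X, derivative_C, add_zero,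
          mul_one]
        have e1 : n + 1 - k - 1 = n - k := by omega
        rw [e1]
        have hsc : (C (((n+1).choose k : ℚ) * (k:ℚ)^(k-1)) * C (((n+1-k : ℕ)) : ℚ))
            = C ((n+1:ℚ)) * C ((n.choose k : ℚ) * (k:ℚ)^(k-1)) := by
          rw [← C_mul, ← C_mul]
          congr 1
          have hcc : ((n+1).choose k : ℚ) * ((n+1-k : ℕ) : ℚ) = (n+1 : ℚ) * (n.choose k : ℚ) := by
            have h2 : ((n.choose k * (n+1) : ℕ) : ℚ) = (((n+1).choose k * (n+1-k) : ℕ) : ℚ) :=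
              congrArg _ (Nat.choose_mul_succ_eq n k)
            push_cast [Nat.cast_sub (by omega : k ≤ n+1)] at h2 ⊢
            linarith
          linear_combination ((k:ℚ)^(k-1)) * hcc
        linear_combination ((X + C ((n+1-k : ℕ) : ℚ))^(n-k)) * hsc
      rw [Finset.sum_congr rfl hterm, ← Finset.mul_sum]
      -- use IH composed with X+1
      have hcomp := congrArg (fun p : ℚ[X] => p.comp (X + 1)) IH
      simp only [Polynomial.sum_comp, mul_comp, pow_comp, add_comp, X_comp, C_comp, one_comp] at hcomp
      have hL : ∀ k ∈ Icc 1 n,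
          C ((n.choose k : ℚ) * (k:ℚ)^(k-1)) * (X + 1 + C ((n-k : ℕ) : ℚ))^(n-k)
          = C ((n.choose k : ℚ) * (k:ℚ)^(k-1)) * (X + C ((n+1-k : ℕ) : ℚ))^(n-k) := by
        intro k hk
        rw [mem_Icc] at hk
        have h1 : ((n+1-k : ℕ) : ℚ) = ((n-k : ℕ) : ℚ) + 1 := by
          rw [show n+1-k = (n-k)+1 from by omega]; push_cast; ring
        rw [h1, C_add, C_1]; ring
      rw [Finset.sum_congr rfl hL] at hcomp
      rw [hcomp]
      -- finish: C(n+1) * (C n * (X+1+C n)^(n-1)) = derivative (C(n+1) * (X + C(n+1))^n)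
      rw [Nat.add_sub_cancel, derivative_C_mul, derivative_pow, derivative_add, derivative_X,
        derivative_C, add_zero, mul_one]
      push_cast
      simp only [C_add, C_1]
      ring
    · -- evaluations at -(n+1) agree
      rw [eval_finset_sum]
      have hterm : ∀ k ∈ Icc 1 (n+1),
          eval (-(n+1:ℚ)) (C (((n+1).choose k : ℚ) * (k:ℚ)^(k-1)) * (X + C ((n+1-k : ℕ) : ℚ))^(n+1-k))
          = (-1:ℚ)^(n+1) * ((-1:ℚ)^k * ((n+1).choose k : ℚ) * (k:ℚ)^n) := by
        intro k hk
        rw [mem_Icc] at hk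
        rw [eval_mul, eval_pow, eval_add, eval_X, eval_C, eval_C]
        have hb : -(n+1:ℚ) + ((n+1-k : ℕ) : ℚ) = -(k:ℚ) := by
          rw [Nat.cast_sub (by omega : k ≤ n+1)]; push_cast; ring
        rw [hb]
        have hnk : (-(k:ℚ))^(n+1-k) = (-1:ℚ)^(n+1-k) * (k:ℚ)^(n+1-k) := by
          rw [← neg_one_mul, mul_pow]
        have hsign : (-1:ℚ)^(n+1-k) = (-1:ℚ)^(n+1) * (-1:ℚ)^k := by
          have hev : ((-1:ℚ)^k) * ((-1:ℚ)^k) = 1 := by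
            rw [← pow_add]; exact Even.neg_one_pow ⟨k, rfl⟩
          calc (-1:ℚ)^(n+1-k) = (-1:ℚ)^(n+1-k) * (((-1:ℚ)^k) * ((-1:ℚ)^k)) := by
                rw [hev, mul_one]
            _ = ((-1:ℚ)^(n+1-k) * (-1:ℚ)^k) * (-1:ℚ)^k := by ring
            _ = (-1:ℚ)^(n+1) * (-1:ℚ)^k := by
                rw [← pow_add, show n+1-k+k = n+1 from by omega]
        have hpow : (k:ℚ)^(k-1) * (k:ℚ)^(n+1-k) = (k:ℚ)^n := by
          rw [← pow_add, show k-1+(n+1-k) = n from by omega]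
        rw [hnk, hsign]
        linear_combination ((-1:ℚ)^(n+1) * (-1:ℚ)^k * (((n+1).choose k : ℕ) : ℚ)) * hpow
      rw [Finset.sum_congr rfl hterm, ← Finset.mul_sum]
      have hsub : ∑ k ∈ Icc 1 (n+1), (-1:ℚ)^k * ((n+1).choose k : ℚ) * (k:ℚ)^n
          = ∑ k ∈ range (n+2), (-1:ℚ)^k * ((n+1).choose k : ℚ) * (k:ℚ)^n := by
        apply Finset.sum_subset
        · intro x hx; rw [mem_Icc] at hx; rw [mem_range]; omega
        · intro x hx hx2
          rw [mem_range] at hx; rw [mem_Icc] at hx2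
          have : x = 0 := by omega
          subst this
          simp [zero_pow (by omega : n ≠ 0)]
      rw [hsub]
      rw [show n+2 = (n+1)+1 from rfl, altsum n (n+1) (by omega) (by omega), mul_zero]
      simp only [eval_mul, eval_pow, eval_add, eval_X, eval_C]
      rw [show -(↑n+1 : ℚ) + ((n+1 : ℕ):ℚ) = 0 by push_cast; ring]
      rw [zero_pow (by omega : n+1-1 ≠ 0), mul_zero]

lemma idA : ∀ n : ℕ, 2 ≤ n →
    ∑ k ∈ Icc 1 (n-1), (n.choose k : ℚ) * (k:ℚ)^(k-1) * ((n-k:ℕ):ℚ)^(n-k)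
      = ((n:ℚ)-1) * (n:ℚ)^(n-1) := by
  intro n hn
  have h := congrArg (fun p : ℚ[X] => Polynomial.eval 0 (derivative p)) (polyB n (by omega))
  simp only [derivative_sum, derivative_C_mul, derivative_pow, derivative_add, derivative_X,
    derivative_C, add_zero, mul_one, eval_finset_sum, eval_mul, eval_pow, eval_add, eval_X,
    eval_C, zero_add] at h
  -- h : ∑ k ∈ Icc 1 n, c_k * (↑(n-k) * ↑(n-k)^(n-k-1)) = ↑n * (↑(n-1) * ↑n^(n-1-1))
  have hsub : ∑ k ∈ Icc 1 (n-1), (n.choose k : ℚ) * (k:ℚ)^(k-1) * (((n-k:ℕ):ℚ) * ((n-k:ℕ):ℚ)^(n-k-1))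
      = ∑ k ∈ Icc 1 n, (n.choose k : ℚ) * (k:ℚ)^(k-1) * (((n-k:ℕ):ℚ) * ((n-k:ℕ):ℚ)^(n-k-1)) := by
    apply Finset.sum_subset
    · intro x hx; rw [mem_Icc] at hx ⊢; omega
    · intro x hx hx2
      rw [mem_Icc] at hx hx2
      have : x = n := by omega
      subst this
      rw [Nat.sub_self]
      push_cast
      ring
  have hstep : ∀ k ∈ Icc 1 (n-1),
      (n.choose k : ℚ) * (k:ℚ)^(k-1) * (((n-k:ℕ):ℚ) * ((n-k:ℕ):ℚ)^(n-k-1))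
      = (n.choose k : ℚ) * (k:ℚ)^(k-1) * ((n-k:ℕ):ℚ)^(n-k) := by
    intro k hk
    rw [mem_Icc] at hk
    have hb : ((n-k:ℕ):ℚ) * ((n-k:ℕ):ℚ)^(n-k-1) = ((n-k:ℕ):ℚ)^(n-k) := by
      rw [← pow_succ']
      congr 1
      omega
    rw [hb]
  calc ∑ k ∈ Icc 1 (n-1), (n.choose k : ℚ) * (k:ℚ)^(k-1) * ((n-k:ℕ):ℚ)^(n-k)
      = ∑ k ∈ Icc 1 (n-1), (n.choose k : ℚ) * (k:ℚ)^(k-1) * (((n-k:ℕ):ℚ) * ((n-k:ℕ):ℚ)^(n-k-1)) :=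
        (Finset.sum_congr rfl hstep).symm
    _ = ∑ k ∈ Icc 1 n, (n.choose k : ℚ) * (k:ℚ)^(k-1) * (((n-k:ℕ):ℚ) * ((n-k:ℕ):ℚ)^(n-k-1)) := hsub
    _ = (n:ℚ) * (((n-1:ℕ):ℚ) * (n:ℚ)^(n-1-1)) := h
    _ = ((n:ℚ)-1) * ((n:ℚ) * (n:ℚ)^(n-1-1)) := by
        rw [Nat.cast_sub (by omega : 1 ≤ n)]; push_cast; ring
    _ = ((n:ℚ)-1) * (n:ℚ)^(n-1) := by
        have hp : (n:ℚ) * (n:ℚ)^(n-1-1) = (n:ℚ)^(n-1) := by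
          rw [← pow_succ']
          congr 1
          omega
        rw [hp]

noncomputable def fc : ℕ → ℚ := fun n => if n = 0 then 0 else (n : ℚ) ^ (n - 1) / n.factorial

lemma fc_pos (n : ℕ) (h : 1 ≤ n) : fc n = (n : ℚ) ^ (n - 1) / n.factorial := by
  simp [fc, Nat.one_le_iff_ne_zero.mp h]

lemma idD : ∀ n : ℕ, 2 ≤ n →
    ∑ p ∈ Finset.HasAntidiagonal.antidiagonal (n-2), ((p.2+1 : ℕ):ℚ) * fc (p.2+1) * fc (p.1+1)
      = ((n:ℚ)-1) * fc n := by
  intro n hn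
  rw [Finset.Nat.sum_antidiagonal_eq_sum_range_succ_mk]
  have hIcc : ∑ k ∈ Icc 1 (n-1), (n.choose k : ℚ) * (k:ℚ)^(k-1) * ((n-k:ℕ):ℚ)^(n-k) / n.factorial
      = ∑ i ∈ range (n-2+1), ((n-2-i+1 : ℕ):ℚ) * fc (n-2-i+1) * fc (i+1) := by
    rw [← Finset.Ico_add_one_right_eq_Icc, Finset.sum_Ico_eq_sum_range]
    rw [show n-1+1-1 = n-2+1 from by omega]
    refine Finset.sum_congr rfl fun i hi => ?_
    rw [mem_range] at hi
    have hk1 : 1 ≤ 1 + i := by omega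
    have hkn : 1 + i ≤ n - 1 := by omega
    have h1 : n - 2 - i + 1 = n - (1+i) := by omega
    rw [h1]
    rw [fc_pos (n-(1+i)) (by omega), fc_pos (i+1) (by omega)]
    rw [Nat.cast_choose ℚ (by omega : 1+i ≤ n)]
    have hfn : ((n-(1+i)).factorial : ℚ) ≠ 0 := Nat.cast_ne_zero.mpr (Nat.factorial_ne_zero _)
    have hfk : (((1+i)).factorial : ℚ) ≠ 0 := Nat.cast_ne_zero.mpr (Nat.factorial_ne_zero _)
    have hfn2 : ((n).factorial : ℚ) ≠ 0 := Nat.cast_ne_zero.mpr (Nat.factorial_ne_zero _)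
    have hie : i + 1 = 1 + i := by omega
    rw [hie]
    have hp : ((n-(1+i) : ℕ):ℚ) * ((n-(1+i) : ℕ):ℚ)^(n-(1+i)-1) = ((n-(1+i) : ℕ):ℚ)^(n-(1+i)) := by
      rw [← pow_succ']
      congr 1
      omega
    field_simp
    rw [← hp]
  rw [show n-2+1 = (n-2)+1 from rfl] at hIcc
  rw [← hIcc, ← Finset.sum_div, idA n hn, fc_pos n (by omega)]
  ring

noncomputable def aa : PowerSeries ℚ := PowerSeries.mk fc

noncomputable def ee (m : ℕ) : ℚ :=
  ∑ k ∈ range (m+1), (k.factorial : ℚ)⁻¹ * PowerSeries.coeff m (aa^k)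

lemma vanish : ∀ k m : ℕ, m < k → PowerSeries.coeff m (aa^k) = 0 := by
  intro k
  induction k with
  | zero => intro m hm; omega
  | succ k IH =>
    intro m hm
    rw [pow_succ, mul_comm, PowerSeries.coeff_mul]
    apply Finset.sum_eq_zero
    intro p hp
    rw [Finset.HasAntidiagonal.mem_antidiagonal] at hp
    rcases Nat.eq_zero_or_pos p.1 with h0 | h1
    · have : PowerSeries.coeff p.1 aa = 0 := by
        rw [h0]
        simp [aa, fc, PowerSeries.coeff_mk]
      rw [this, zero_mul]
    · have : PowerSeries.coeff p.2 (aa^k) = 0 := IH p.2 (by omega)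
      rw [this, mul_zero]

lemma ode : ∀ m : ℕ, 1 ≤ m → (m:ℚ) * ee m
    = ∑ p ∈ antidiagonal (m-1), ((p.2+1 : ℕ):ℚ) * fc (p.2+1) * ee p.1 := by
  intro m hm
  have hda : ∀ j : ℕ, PowerSeries.coeff j (PowerSeries.derivative ℚ aa)
      = fc (j+1) * ((j+1 : ℕ):ℚ) := by
    intro j
    rw [PowerSeries.coeff_derivative]
    simp [aa, PowerSeries.coeff_mk]
  have hcd : ∀ k : ℕ, PowerSeries.coeff m (aa^k) * (m:ℚ)
      = (k:ℚ) * ∑ p ∈ antidiagonal (m-1),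
          PowerSeries.coeff p.1 (aa^(k-1)) * (fc (p.2+1) * ((p.2+1 : ℕ):ℚ)) := by
    intro k
    have h1 : PowerSeries.coeff (m-1) (PowerSeries.derivative ℚ (aa^k))
        = PowerSeries.coeff m (aa^k) * (m:ℚ) := by
      rw [PowerSeries.coeff_derivative]
      rw [show m-1+1 = m from by omega, Nat.cast_sub hm]
      push_cast
      ring
    rw [← h1, Derivation.leibniz_pow]
    simp only [smul_eq_mul]
    rw [map_nsmul, nsmul_eq_mul, PowerSeries.coeff_mul]
    congr 1
    exact Finset.sum_congr rfl fun p _ => by rw [hda]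
  calc (m:ℚ) * ee m
      = ∑ k ∈ range (m+1), (k.factorial : ℚ)⁻¹ * (PowerSeries.coeff m (aa^k) * (m:ℚ)) := by
        rw [ee, Finset.mul_sum]; exact Finset.sum_congr rfl fun k _ => by ring
    _ = ∑ k ∈ range (m+1), (k.factorial : ℚ)⁻¹ * ((k:ℚ) * ∑ p ∈ antidiagonal (m-1),
          PowerSeries.coeff p.1 (aa^(k-1)) * (fc (p.2+1) * ((p.2+1 : ℕ):ℚ))) :=
        Finset.sum_congr rfl fun k _ => by rw [hcd]
    _ = ∑ i ∈ range m, (i.factorial : ℚ)⁻¹ * ∑ p ∈ antidiagonal (m-1),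
          PowerSeries.coeff p.1 (aa^i) * (fc (p.2+1) * ((p.2+1 : ℕ):ℚ)) := by
        rw [Finset.sum_range_succ']
        simp only [Nat.cast_zero, zero_mul, mul_zero, add_zero]
        refine Finset.sum_congr rfl fun i _ => ?_
        have hf : ((i+1).factorial : ℚ) = ((i+1:ℕ):ℚ) * (i.factorial : ℚ) := by
          rw [Nat.factorial_succ]; push_cast; ring
        rw [hf, Nat.add_sub_cancel]
        have hi : (i.factorial : ℚ) ≠ 0 := Nat.cast_ne_zero.mpr (Nat.factorial_ne_zero _)
        have hi1 : ((i+1:ℕ):ℚ) ≠ 0 := by positivity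
        field_simp
    _ = ∑ p ∈ antidiagonal (m-1), (fc (p.2+1) * ((p.2+1 : ℕ):ℚ)) *
          ∑ i ∈ range m, (i.factorial : ℚ)⁻¹ * PowerSeries.coeff p.1 (aa^i) := by
        simp only [Finset.mul_sum]
        rw [Finset.sum_comm]
        exact Finset.sum_congr rfl fun p _ => Finset.sum_congr rfl fun i _ => by ring
    _ = ∑ p ∈ antidiagonal (m-1), ((p.2+1 : ℕ):ℚ) * fc (p.2+1) * ee p.1 := by
        refine Finset.sum_congr rfl fun p hp => ?_
        rw [Finset.HasAntidiagonal.mem_antidiagonal] at hp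
        have hsub : ∑ i ∈ range (p.1+1), (i.factorial : ℚ)⁻¹ * PowerSeries.coeff p.1 (aa^i)
            = ∑ i ∈ range m, (i.factorial : ℚ)⁻¹ * PowerSeries.coeff p.1 (aa^i) := by
          apply Finset.sum_subset
          · intro x hx; rw [mem_range] at hx ⊢; omega
          · intro x hx hx2
            rw [mem_range] at hx hx2
            rw [vanish x p.1 (by omega), mul_zero]
        rw [ee, hsub]
        ring


lemma mainlem : ∀ n : ℕ, 1 ≤ n → fc n = ee (n-1) := by
  intro n
  induction n using Nat.strong_induction_on with
  | _ n IH =>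
    intro hn
    rcases Nat.lt_or_ge n 2 with h2 | h2
    · have h1 : n = 1 := by omega
      subst h1
      have : ee 0 = 1 := by
        rw [ee]
        simp
      rw [this, fc_pos 1 (by omega)]
      norm_num
    · have hode := ode (n-1) (by omega)
      rw [show n-1-1 = n-2 from by omega] at hode
      have hIH : ∀ p ∈ antidiagonal (n-2), ((p.2+1 : ℕ):ℚ) * fc (p.2+1) * ee p.1
          = ((p.2+1 : ℕ):ℚ) * fc (p.2+1) * fc (p.1+1) := by
        intro p hp
        rw [Finset.HasAntidiagonal.mem_antidiagonal] at hp
        have := IH (p.1+1) (by omega) (by omega)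
        rw [Nat.add_sub_cancel] at this
        rw [this]
      rw [Finset.sum_congr rfl hIH, idD n h2] at hode
      have hne : ((n-1 : ℕ):ℚ) ≠ 0 := by
        rw [Nat.cast_sub (by omega : 1 ≤ n)]
        push_cast
        intro hcon
        have : (n:ℚ) = 1 := by linarith
        have : n = 1 := by exact_mod_cast this
        omega
      have hcast : ((n-1 : ℕ):ℚ) = (n:ℚ) - 1 := by
        rw [Nat.cast_sub (by omega : 1 ≤ n)]; push_cast; ring
      rw [hcast] at hode
      have := mul_left_cancel₀ (show ((n:ℚ)-1) ≠ 0 from hcast ▸ hne) hode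
      exact this.symm

/-- The exponential generating function `a(t) = Σ_{n≥1} n^{n-1} t^n/n!` of labeled rooted
trees satisfies `a(t) = t·exp(a(t))` as formal power series.  Since `a` has zero constant
term, the composite `exp(a(t))` has `n`-th coefficient `Σ_{k≤n} (1/k!)·coeff_n(a^k)`, so the
functional equation reads coefficientwise as below. -/
theorem egf_labeled_rooted_trees :
    (PowerSeries.constantCoeff
        (PowerSeries.mk fun n => if n = 0 then 0 else (n : ℚ) ^ (n - 1) / n.factorial) = 0)
    ∧ ∀ n : ℕ, 1 ≤ n →
        PowerSeries.coeff n
            (PowerSeries.mk fun m => if m = 0 then 0 else (m : ℚ) ^ (m - 1) / m.factorial)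
          = ∑ k ∈ Finset.range n, (k.factorial : ℚ)⁻¹ *
              PowerSeries.coeff (n - 1)
                ((PowerSeries.mk fun m =>
                    if m = 0 then 0 else (m : ℚ) ^ (m - 1) / m.factorial) ^ k) := by
  have haa : (PowerSeries.mk fun m : ℕ => if m = 0 then (0:ℚ) else (m : ℚ) ^ (m - 1) / m.factorial)
      = aa := rfl
  constructor
  · rw [haa]
    have : PowerSeries.constantCoeff aa = fc 0 := by
      rw [aa]
      simp
    rw [this]
    simp [fc]
  · intro n hn
    rw [haa]
    have hc : PowerSeries.coeff n aa = fc n := by rw [aa, PowerSeries.coeff_mk]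
    rw [hc, mainlem n hn, ee, show n-1+1 = n from by omega]
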